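/- Let d ≥ 1 and ε > 0, and let K be a compact convex set in ℝ^d with nonempty interior and volume 1. Then there exists a positive integer n = n(K, ε) such that: if ℱ is a finite family of convex sets in ℝ^d and the intersection of every subfamily of ℱ of size at most n contains a scaled isometric copy of K of volume at least 1, then ⋂ℱ contains a scaled isometric copy of K of volume at least 1 − ε. -/

import Mathlib

open MeasureTheory Metric Set
open scoped ENNReal Pointwise

section Aux

variable {d : ℕ}

/-- An orthogonal matrix gives a linear isometry equivalence of Euclidean space. -/
noncomputable def orthIso {A : Matrix (Fin d) (Fin d) ℝ}
    (hA : A ∈ Matrix.orthogonalGroup (Fin d) ℝ) :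
    EuclideanSpace ℝ (Fin d) ≃ₗᵢ[ℝ] EuclideanSpace ℝ (Fin d) := by
  have h1 : A * star A = 1 := (Matrix.mem_unitaryGroup_iff).1 hA
  have h2 : star A * A = 1 := (Matrix.mem_unitaryGroup_iff').1 hA
  refine ⟨LinearEquiv.ofLinear (Matrix.toEuclideanLin A) (Matrix.toEuclideanLin (star A)) ?_ ?_,
    ?_⟩
  · apply LinearMap.ext; intro x
    simp only [LinearMap.comp_apply, Matrix.toEuclideanLin_apply, LinearMap.id_apply]
    simp [Matrix.mulVec_mulVec, h1]
  · apply LinearMap.ext; intro x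
    simp only [LinearMap.comp_apply, Matrix.toEuclideanLin_apply, LinearMap.id_apply]
    simp [Matrix.mulVec_mulVec, h2]
  · intro x
    show ‖Matrix.toEuclideanLin A x‖ = ‖x‖
    have hadj : Matrix.toEuclideanLin (star A) = LinearMap.adjoint (Matrix.toEuclideanLin A) := by
      rw [Matrix.star_eq_conjTranspose, Matrix.toEuclideanLin_conjTranspose_eq_adjoint]
    have hinner : inner ℝ (Matrix.toEuclideanLin A x) (Matrix.toEuclideanLin A x)
        = (inner ℝ x x : ℝ) := by
      rw [← LinearMap.adjoint_inner_right, ← hadj]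
      congr 1
      simp only [Matrix.toEuclideanLin_apply]
      simp [Matrix.mulVec_mulVec, h2]
    have := congrArg Real.sqrt hinner
    rwa [real_inner_self_eq_norm_mul_norm, real_inner_self_eq_norm_mul_norm,
      Real.sqrt_mul_self (norm_nonneg _), Real.sqrt_mul_self (norm_nonneg _)] at this

@[simp] lemma orthIso_apply {A : Matrix (Fin d) (Fin d) ℝ}
    (hA : A ∈ Matrix.orthogonalGroup (Fin d) ℝ) (x : EuclideanSpace ℝ (Fin d)) :
    orthIso hA x = Matrix.toEuclideanLin A x := rfl

/-- Volume of a scaled isometric copy of a measurable set. -/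
lemma volume_copy (a : EuclideanSpace ℝ (Fin d)) (α : ℝ) {A : Matrix (Fin d) (Fin d) ℝ}
    (hA : A ∈ Matrix.orthogonalGroup (Fin d) ℝ) {K : Set (EuclideanSpace ℝ (Fin d))}
    (hK : MeasurableSet K) :
    volume ((fun x => a + α • Matrix.toEuclideanLin A x) '' K)
      = ENNReal.ofReal (|α| ^ d) * volume K := by
  set e := orthIso hA with he'
  have he : ∀ x, e x = Matrix.toEuclideanLin A x := fun x => rfl
  have himg : (fun x => a + α • Matrix.toEuclideanLin A x) '' K
      = a +ᵥ (α • (e '' K)) := by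
    ext y
    simp only [Set.mem_image, Set.mem_vadd_set, Set.mem_smul_set, he]
    constructor
    · rintro ⟨x, hx, rfl⟩; exact ⟨α • e x, ⟨e x, ⟨x, hx, (he x).symm⟩, rfl⟩, by simp [he]⟩
    · rintro ⟨_, ⟨_, ⟨x, hx, rfl⟩, rfl⟩, rfl⟩; exact ⟨x, hx, by simp [he, vadd_eq_add]⟩
  rw [himg, measure_vadd, Measure.addHaar_smul _, finrank_euclideanSpace_fin, abs_pow]
  congr 1
  rw [show e '' K = e.symm ⁻¹' K from e.toEquiv.image_eq_preimage_symm K]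
  exact e.symm.measurePreserving.measure_preimage hK.nullMeasurableSet

/-- The matrix-to-continuous-linear-map map. -/
noncomputable def phi (d : ℕ) : Matrix (Fin d) (Fin d) ℝ →ₗ[ℝ]
    (EuclideanSpace ℝ (Fin d) →L[ℝ] EuclideanSpace ℝ (Fin d)) :=
  (LinearMap.toContinuousLinearMap.toLinearMap).comp (Matrix.toEuclideanLin.toLinearMap)

lemma phi_apply (A : Matrix (Fin d) (Fin d) ℝ) (x : EuclideanSpace ℝ (Fin d)) :
    phi d A x = Matrix.toEuclideanLin A x := rfl

lemma isCompact_orth :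
    IsCompact {A : Matrix (Fin d) (Fin d) ℝ | A ∈ Matrix.orthogonalGroup (Fin d) ℝ} := by
  have hclosed : IsClosed {A : Matrix (Fin d) (Fin d) ℝ | A ∈ Matrix.orthogonalGroup (Fin d) ℝ} := by
    have : {A : Matrix (Fin d) (Fin d) ℝ | A ∈ Matrix.orthogonalGroup (Fin d) ℝ}
        = (fun A : Matrix (Fin d) (Fin d) ℝ => A * star A) ⁻¹' {1} := by
      ext A; simp [Matrix.mem_unitaryGroup_iff]
    rw [this]
    exact IsClosed.preimage (continuous_id.matrix_mul continuous_id.matrix_conjTranspose)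
      isClosed_singleton
  have hsub : {A : Matrix (Fin d) (Fin d) ℝ | A ∈ Matrix.orthogonalGroup (Fin d) ℝ}
      ⊆ Set.univ.pi (fun _ : Fin d => Set.univ.pi (fun _ : Fin d => Icc (-1:ℝ) 1)) := by
    intro A hA
    intro i _
    intro j _
    rw [mem_Icc]
    have := entry_norm_bound_of_unitary hA i j
    rw [Real.norm_eq_abs] at this
    exact abs_le.1 this
  exact IsCompact.of_isClosed_subset
    (isCompact_univ_pi fun _ => isCompact_univ_pi fun _ => isCompact_Icc) hclosed hsub

lemma neg_mem_orth {A : Matrix (Fin d) (Fin d) ℝ}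
    (hA : A ∈ Matrix.orthogonalGroup (Fin d) ℝ) : -A ∈ Matrix.orthogonalGroup (Fin d) ℝ := by
  rw [Matrix.mem_unitaryGroup_iff] at hA ⊢
  rw [star_neg, neg_mul_neg]
  exact hA

end Aux

set_option maxHeartbeats 2000000 in
/-- For d ≥ 1, ε > 0, and a compact convex K ⊆ ℝ^d with nonempty interior
and volume 1, there is n = n(K, ε) such that: if every subfamily of size ≤ n of a finite
family ℱ of convex sets has intersection containing a scaled isometric copy of K of
volume ≥ 1, then ⋂ℱ contains a scaled isometric copy of K of volume ≥ 1 - ε. -/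
theorem stmt12 (d : ℕ) (hd : 1 ≤ d) (ε : ℝ) (hε : 0 < ε)
    (K : Set (EuclideanSpace ℝ (Fin d))) (hKc : IsCompact K) (hconv : Convex ℝ K)
    (hint : (interior K).Nonempty) (hvol : volume K = 1) :
    ∃ n : ℕ, 0 < n ∧
      ∀ F : Finset (Set (EuclideanSpace ℝ (Fin d))), (∀ C ∈ F, Convex ℝ C) →
        (∀ G ⊆ F, G.card ≤ n →
          ∃ (a : EuclideanSpace ℝ (Fin d)) (α : ℝ),
            ∃ A ∈ Matrix.orthogonalGroup (Fin d) ℝ,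
              1 ≤ volume ((fun x => a + α • Matrix.toEuclideanLin A x) '' K) ∧
              (fun x => a + α • Matrix.toEuclideanLin A x) '' K ⊆
                ⋂₀ (G : Set (Set (EuclideanSpace ℝ (Fin d))))) →
        ∃ (a : EuclideanSpace ℝ (Fin d)) (α : ℝ),
          ∃ A ∈ Matrix.orthogonalGroup (Fin d) ℝ,
            ENNReal.ofReal (1 - ε) ≤ volume ((fun x => a + α • Matrix.toEuclideanLin A x) '' K) ∧
            (fun x => a + α • Matrix.toEuclideanLin A x) '' K ⊆
              ⋂₀ (F : Set (Set (EuclideanSpace ℝ (Fin d)))) := by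
  classical
  have hd0 : (0:ℝ) < d := by exact_mod_cast hd
  -- the shrinking parameter
  set ε' : ℝ := min (ε / d) (1/2) with hε'def
  have hε'pos : 0 < ε' := lt_min (by positivity) (by norm_num)
  have hε'le : ε' ≤ 1/2 := min_le_right _ _
  have h1ε' : 0 < 1 - ε' := by linarith
  -- interior ball
  obtain ⟨x₀, hx₀i⟩ := hint
  have hx₀K : x₀ ∈ K := interior_subset hx₀i
  obtain ⟨r', hr', hball'⟩ := Metric.isOpen_iff.1 isOpen_interior x₀ hx₀i
  have hr : 0 < r' / 2 := by linarith
  set r : ℝ := r' / 2 with hrdef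
  have hball : closedBall x₀ r ⊆ K := by
    intro y hy
    apply interior_subset (hball' _)
    rw [mem_closedBall] at hy
    rw [mem_ball]
    linarith
  -- bounding radius
  obtain ⟨R, hR0, hKR⟩ : ∃ R : ℝ, 0 < R ∧ K ⊆ closedBall 0 R := by
    obtain ⟨R, hR, h⟩ := hKc.isBounded.subset_closedBall_lt 0 0
    exact ⟨R, hR, h⟩
  -- distances
  set δ : ℝ := r * ε' / (1 - ε') with hδdef
  have hδ : 0 < δ := by positivity
  set δ' : ℝ := δ / R with hδ'def
  have hδ' : 0 < δ' := by positivity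
  -- the orthogonal group and the net
  set O : Set (Matrix (Fin d) (Fin d) ℝ) := {A | A ∈ Matrix.orthogonalGroup (Fin d) ℝ} with hOdef
  have hcomp : IsCompact (phi d '' O) :=
    isCompact_orth.image (phi d).continuous_of_finiteDimensional
  obtain ⟨t, ht1, ht2⟩ :=
    hcomp.elim_nhds_subcover (fun T => ball T δ') (fun T _ => ball_mem_nhds T hδ')
  -- a choice of matrix for each element of the image of the orthogonal group
  set M : (EuclideanSpace ℝ (Fin d) →L[ℝ] EuclideanSpace ℝ (Fin d)) → Matrix (Fin d) (Fin d) ℝ :=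
    fun T => if h : T ∈ phi d '' O then h.choose else 1 with hMdef
  have hM : ∀ T ∈ phi d '' O, M T ∈ O ∧ phi d (M T) = T := by
    intro T h
    have hspec := h.choose_spec
    simp only [hMdef, dif_pos h]
    exact ⟨hspec.1, hspec.2⟩
  refine ⟨t.card * (d + 1) + 1, Nat.succ_pos _, ?_⟩
  intro F hF hHyp
  -- the translation sets
  set S : Matrix (Fin d) (Fin d) ℝ → Set (EuclideanSpace ℝ (Fin d)) → Set (EuclideanSpace ℝ (Fin d)) :=
    fun B C => {a : EuclideanSpace ℝ (Fin d) | ∀ k ∈ K, a + (1 - ε') • Matrix.toEuclideanLin B k ∈ C} with hSdef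
  have hSconv : ∀ B C, Convex ℝ C → Convex ℝ (S B C) := by
    intro B C hC a₁ h₁ a₂ h₂ θ₁ θ₂ hθ₁ hθ₂ hθ
    intro k hk
    have hmem := hC (h₁ k hk) (h₂ k hk) hθ₁ hθ₂ hθ
    have hθ₂' : θ₂ = 1 - θ₁ := by linarith
    subst hθ₂'
    convert hmem using 1
    module
  -- key claim: some element of the net admits a common translation point for all of F
  have key : ∃ T ∈ t, (⋂ C ∈ F, S (M T) C).Nonempty := by
    by_contra hcon
    push_neg at hcon
    have hsmall : ∀ T ∈ t, ∃ I : Finset (Set (EuclideanSpace ℝ (Fin d))), I ⊆ F ∧ I.card ≤ d + 1 ∧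
        (⋂ C ∈ I, S (M T) C) = ∅ := by
      intro T hT
      by_contra hno
      push_neg at hno
      have hne : (⋂ C ∈ F, S (M T) C).Nonempty := by
        apply Convex.helly_theorem' (𝕜 := ℝ)
        · intro C hC; exact hSconv _ C (hF C hC)
        · intro I hIF hIc
          rw [finrank_euclideanSpace_fin] at hIc
          exact hno I hIF hIc
      rw [hcon T hT] at hne
      exact Set.not_nonempty_empty hne
    choose I hI1 hI2 hI3 using hsmall
    set G : Finset (Set (EuclideanSpace ℝ (Fin d))) := t.attach.biUnion (fun T => I T.1 T.2) with hGdef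
    have hGF : G ⊆ F := by
      intro C hC
      obtain ⟨T, _, hC'⟩ := Finset.mem_biUnion.1 hC
      exact hI1 T.1 T.2 hC'
    have hGcard : G.card ≤ t.card * (d + 1) := by
      calc G.card ≤ ∑ T ∈ t.attach, (I T.1 T.2).card := Finset.card_biUnion_le
        _ ≤ t.attach.card * (d + 1) := by
            apply Finset.sum_le_card_nsmul
            intro T _
            exact hI2 T.1 T.2
        _ = t.card * (d + 1) := by rw [Finset.card_attach]
    obtain ⟨a, α, A, hAmem, hvol1, hsub⟩ := hHyp G hGF (le_trans hGcard (Nat.le_succ _))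
    -- from the volume bound, |α| ≥ 1
    rw [volume_copy a α hAmem hKc.measurableSet, hvol, mul_one] at hvol1
    have hα1 : 1 ≤ |α| := by
      by_contra hlt
      push_neg at hlt
      have : |α| ^ d < 1 := pow_lt_one₀ (abs_nonneg α) hlt (by omega)
      have h2 : ENNReal.ofReal (|α| ^ d) < 1 := by
        rw [← ENNReal.ofReal_one]
        exact ENNReal.ofReal_lt_ofReal_iff_of_nonneg (by positivity) |>.2 this
      exact absurd hvol1 (not_le.2 h2)
    have hαpos : (0:ℝ) < |α| := by linarith
    -- replace A by A' with positive scale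
    set A' : Matrix (Fin d) (Fin d) ℝ := if 0 ≤ α then A else -A with hA'def
    have hA'mem : A' ∈ Matrix.orthogonalGroup (Fin d) ℝ := by
      by_cases h : 0 ≤ α
      · simp only [hA'def, if_pos h]; exact hAmem
      · simp only [hA'def, if_neg h]; exact neg_mem_orth hAmem
    have hAA' : ∀ x : EuclideanSpace ℝ (Fin d), α • Matrix.toEuclideanLin A x = |α| • Matrix.toEuclideanLin A' x := by
      intro x
      by_cases h : 0 ≤ α
      · simp only [hA'def, if_pos h, abs_of_nonneg h]
      · simp only [hA'def, if_neg h]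
        rw [map_neg, LinearMap.neg_apply, abs_of_neg (lt_of_not_ge h), smul_neg, neg_smul,
          neg_neg]
    -- find the net element close to A'
    have hφA' : phi d A' ∈ phi d '' O := ⟨A', hA'mem, rfl⟩
    obtain ⟨T, hTt, hTball⟩ := Set.mem_iUnion₂.1 (ht2 hφA')
    have hBO := (hM T (ht1 T hTt)).1
    have hφB : phi d (M T) = T := (hM T (ht1 T hTt)).2
    have hdist : ‖phi d (M T) - phi d A'‖ < δ' := by
      rw [mem_ball, dist_eq_norm] at hTball
      rw [hφB, norm_sub_rev]
      exact hTball
    -- the isometry for A'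
    set f := orthIso hA'mem with hfdef
    -- the common point
    set c₁ : EuclideanSpace ℝ (Fin d) := a + (|α| - 1) • Matrix.toEuclideanLin A' x₀ with hc₁def
    set astar : EuclideanSpace ℝ (Fin d) := ε' • Matrix.toEuclideanLin A' x₀ + c₁ with hastardef
    have hastar : ∀ C ∈ G, astar ∈ S (M T) C := by
      intro C hC
      intro k hk
      set ev : EuclideanSpace ℝ (Fin d) := Matrix.toEuclideanLin (M T) k - Matrix.toEuclideanLin A' k with hevdef
      have hkR : ‖k‖ ≤ R := by
        have := hKR hk
        rwa [mem_closedBall, dist_zero_right] at this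
      have hevle : ‖ev‖ ≤ δ := by
        have heq : ev = (phi d (M T) - phi d A') k := by
          simp [hevdef, ContinuousLinearMap.sub_apply, phi_apply]
        calc ‖ev‖ = ‖(phi d (M T) - phi d A') k‖ := by rw [heq]
          _ ≤ ‖phi d (M T) - phi d A'‖ * ‖k‖ := ContinuousLinearMap.le_opNorm _ _
          _ ≤ δ' * R := by
              apply mul_le_mul (le_of_lt hdist) hkR (norm_nonneg _) (le_of_lt hδ')
          _ = δ := by rw [hδ'def]; field_simp
      set z : EuclideanSpace ℝ (Fin d) := x₀ + ((1 - ε') / ε') • (f.symm ev) with hzdef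
      have hz : z ∈ K := by
        apply hball
        rw [mem_closedBall]
        have : dist z x₀ = ‖((1 - ε') / ε') • (f.symm ev)‖ := by
          rw [dist_eq_norm, hzdef]; congr 1; abel
        rw [this, norm_smul, f.symm.norm_map, Real.norm_eq_abs,
          abs_of_nonneg (by positivity : (0:ℝ) ≤ (1 - ε') / ε')]
        calc (1 - ε') / ε' * ‖ev‖ ≤ (1 - ε') / ε' * δ := by
              apply mul_le_mul_of_nonneg_left hevle (by positivity)
          _ = r := by
              rw [hδdef]; field_simp
      set k' : EuclideanSpace ℝ (Fin d) := (1 - ε') • k + ε' • z with hk'def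
      have hk' : k' ∈ K := hconv hk hz (le_of_lt h1ε') (le_of_lt hε'pos) (by ring)
      set k'' : EuclideanSpace ℝ (Fin d) := (1 / |α|) • k' + (1 - 1 / |α|) • x₀ with hk''def
      have hk'' : k'' ∈ K := by
        apply hconv hk' hx₀K (by positivity)
        · have : 1 / |α| ≤ 1 := by
            rw [div_le_one hαpos]; exact hα1
          linarith
        · ring
      -- the identity
      have hfsymm : Matrix.toEuclideanLin A' (f.symm ev) = ev := by
        rw [← orthIso_apply hA'mem, ← hfdef]
        exact f.apply_symm_apply ev
      have hid : astar + (1 - ε') • Matrix.toEuclideanLin (M T) k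
          = a + α • Matrix.toEuclideanLin A k'' := by
        rw [hAA']
        have hMT : Matrix.toEuclideanLin (M T) k = Matrix.toEuclideanLin A' k + ev := by
          rw [hevdef]; abel
        have e3 : Matrix.toEuclideanLin A' z
            = Matrix.toEuclideanLin A' x₀ + ((1 - ε') / ε') • ev := by
          rw [hzdef, map_add, _root_.map_smul, hfsymm]
        have e2 : Matrix.toEuclideanLin A' k'
            = (1 - ε') • Matrix.toEuclideanLin A' k + ε' • Matrix.toEuclideanLin A' z := by
          rw [hk'def, map_add, _root_.map_smul, _root_.map_smul]
        have e1 : Matrix.toEuclideanLin A' k''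
            = (1 / |α|) • Matrix.toEuclideanLin A' k'
              + (1 - 1 / |α|) • Matrix.toEuclideanLin A' x₀ := by
          rw [hk''def, map_add, _root_.map_smul, _root_.map_smul]
        rw [hastardef, hc₁def, hMT, e1, e2, e3]
        have hε'ne : ε' ≠ 0 := ne_of_gt hε'pos
        have hαne : |α| ≠ 0 := ne_of_gt hαpos
        match_scalars <;> field_simp
      show astar + (1 - ε') • Matrix.toEuclideanLin (M T) k ∈ C
      rw [hid]
      have hmem : a + α • Matrix.toEuclideanLin A k''
          ∈ (fun x => a + α • Matrix.toEuclideanLin A x) '' K := ⟨k'', hk'', rfl⟩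
      exact Set.mem_sInter.1 (hsub hmem) C (by exact_mod_cast hC)
    -- contradiction with emptiness
    have hmemI : astar ∈ ⋂ C ∈ I T hTt, S (M T) C := by
      apply Set.mem_biInter
      intro C hC
      apply hastar
      rw [hGdef]
      exact Finset.mem_biUnion.2 ⟨⟨T, hTt⟩, Finset.mem_attach _ _, hC⟩
    rw [hI3 T hTt] at hmemI
    exact hmemI
  -- conclude
  obtain ⟨T, hTt, a₀, ha₀⟩ := key
  have hMTmem : M T ∈ Matrix.orthogonalGroup (Fin d) ℝ := (hM T (ht1 T hTt)).1
  refine ⟨a₀, 1 - ε', M T, hMTmem, ?_, ?_⟩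
  · rw [volume_copy a₀ (1 - ε') hMTmem hKc.measurableSet, hvol, mul_one]
    apply ENNReal.ofReal_le_ofReal
    rw [abs_of_pos h1ε']
    have hbern : 1 + (d : ℝ) * (-ε') ≤ (1 + (-ε')) ^ d :=
      one_add_mul_le_pow (by linarith : (-2:ℝ) ≤ -ε') d
    have hdε' : (d : ℝ) * ε' ≤ ε := by
      have : ε' ≤ ε / d := min_le_left _ _
      calc (d : ℝ) * ε' ≤ (d : ℝ) * (ε / d) := by
            apply mul_le_mul_of_nonneg_left this (le_of_lt hd0)
        _ = ε := by field_simp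
    have : 1 - ε ≤ 1 + (d : ℝ) * (-ε') := by linarith
    calc 1 - ε ≤ 1 + (d : ℝ) * (-ε') := this
      _ ≤ (1 + (-ε')) ^ d := hbern
      _ = (1 - ε') ^ d := by ring_nf
  · rintro y ⟨k, hk, rfl⟩
    intro C hC
    have := Set.mem_iInter₂.1 ha₀ C (by exact_mod_cast hC)
    exact this k hk
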